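/- Let P and S be strings of equal length m, and let a ∈ [1, m] be a match, i.e., P[1,a] = S[m−a+1, m]. Let 1 ≤ l_p ≤ r_p ≤ m and 1 ≤ l_s ≤ r_s ≤ m with r_p − l_p = r_s − l_s, and set m' = r_p − l_p + 1, P' = P[l_p, r_p], S' = S[l_s, r_s], and a' = a − l_p − m + r_s + 1. If 1 ≤ a' ≤ m', then a' is a match for the pair (P', S'), i.e., P'[1, a'] = S'[m' − a' + 1, m']. -/
import Mathlib

/-- **A match restricts to substrings.**
`P` and `S` are strings of length `m`, modeled as functions `ℕ → Alph` on
1-indexed positions; `a ∈ [1,m]` is a match, i.e. `P[1,a] = S[m−a+1,m]`.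
For substrings `P' = P[lp, rp]` and `S' = S[ls, rs]` of equal length
`m' = rp − lp + 1`, set `a' = a − lp − m + rs + 1` (as a truncated natural
number subtraction `a + rs + 1 - (lp + m)`).  If `1 ≤ a' ≤ m'` then `a'` is a
match for `(P', S')`, i.e. `P'[1,a'] = S'[m'−a'+1, m']`, which unfolds to
`P (lp + t) = S (ls + m' − a' + t)` for all `t < a'`. -/
theorem match_restricts_to_substrings {Alph : Type*} (P S : ℕ → Alph)
    (m a : ℕ) (ha1 : 1 ≤ a) (ham : a ≤ m)
    (hmatch : ∀ t < a, P (1 + t) = S (m - a + 1 + t))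
    (lp rp ls rs : ℕ)
    (hlp : 1 ≤ lp) (hplr : lp ≤ rp) (hrp : rp ≤ m)
    (hls : 1 ≤ ls) (hslr : ls ≤ rs) (hrs : rs ≤ m)
    (hlen : rp - lp = rs - ls)
    (m' a' : ℕ)
    (hm' : m' = rp - lp + 1)
    (ha' : a' = a + rs + 1 - (lp + m))
    (ha'1 : 1 ≤ a') (ha'm : a' ≤ m') :
    ∀ t < a', P (lp + t) = S (ls + m' - a' + t) := by
  intro t ht
  have h1 := hmatch (lp - 1 + t) (by omega)
  have e1 : lp + t = 1 + (lp - 1 + t) := by omega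
  have e2 : ls + m' - a' + t = m - a + 1 + (lp - 1 + t) := by omega
  rw [e1, e2, h1]
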